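/- Let w ∈ ℂ, τ in the upper half-plane, d an odd positive integer, and k an integer. Then ∑_{ℓ=0}^{d−1} e^{−4iπkℓ/d} θ₍₀₎(w + ℓ/d, τ) = d · e^{2iπ k² τ} · e^{4iπ k w} · θ₍₀₎(dw + dkτ, d²τ), and likewise ∑_{ℓ=0}^{d−1} e^{−4iπkℓ/d} θ₍₁₎(w + ℓ/d, τ) = d · e^{2iπ k² τ} · e^{4iπ k w} · θ₍₁₎(dw + dkτ, d²τ). -/

import Mathlib

open Finset

/-- Theta with characteristic `θ₍₀₎(z, τ) = ∑_{m even} exp(iπ(τ/2)m²) exp(2iπmz)`. -/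
noncomputable def theta0 (z τ : ℂ) : ℂ :=
  ∑' m : ℤ, if Even m then
    Complex.exp ((Real.pi : ℂ) * Complex.I * (τ / 2) * (m : ℂ) ^ 2) *
      Complex.exp (2 * (Real.pi : ℂ) * Complex.I * (m : ℂ) * z)
  else 0

/-- Theta with characteristic `θ₍₁₎(z, τ) = ∑_{m odd} exp(iπ(τ/2)m²) exp(2iπmz)`. -/
noncomputable def theta1 (z τ : ℂ) : ℂ :=
  ∑' m : ℤ, if Odd m then
    Complex.exp ((Real.pi : ℂ) * Complex.I * (τ / 2) * (m : ℂ) ^ 2) *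
      Complex.exp (2 * (Real.pi : ℂ) * Complex.I * (m : ℂ) * z)
  else 0

private lemma summable_aux (p : ℤ → Prop) [DecidablePred p] (z τ : ℂ) (hτ : 0 < τ.im) :
    Summable (fun m : ℤ => if p m then
      Complex.exp ((Real.pi : ℂ) * Complex.I * (τ / 2) * (m : ℂ) ^ 2) *
        Complex.exp (2 * (Real.pi : ℂ) * Complex.I * (m : ℂ) * z) else 0) := by
  have h : Summable (fun m : ℤ => jacobiTheta₂_term m z (τ / 2)) := by
    rw [summable_jacobiTheta₂_term_iff]
    simpa using half_pos hτ
  refine (h.indicator {m | p m}).congr fun m => ?_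
  simp only [Set.indicator_apply, Set.mem_setOf_eq, jacobiTheta₂_term]
  split_ifs
  · rw [← Complex.exp_add]; congr 1; ring
  · rfl

private lemma geom_aux (d : ℕ) (hd0 : 0 < d) (a : ℤ) :
    ∑ l ∈ Finset.range d, Complex.exp (2 * (Real.pi : ℂ) * Complex.I * (a : ℂ) * (l : ℂ) / d)
      = if (d : ℤ) ∣ a then (d : ℂ) else 0 := by
  set r : ℂ := Complex.exp (2 * (Real.pi : ℂ) * Complex.I * (a : ℂ) / d) with hr
  have hterm : ∀ l : ℕ, Complex.exp (2 * (Real.pi : ℂ) * Complex.I * (a : ℂ) * (l : ℂ) / d)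
      = r ^ l := by
    intro l
    rw [hr, ← Complex.exp_nat_mul]
    congr 1; ring
  rw [Finset.sum_congr rfl fun l _ => hterm l]
  have hd0' : (d : ℂ) ≠ 0 := Nat.cast_ne_zero.mpr hd0.ne'
  split_ifs with hdvd
  · obtain ⟨j, hj⟩ := hdvd
    have : r = 1 := by
      rw [hr, hj]
      push_cast
      rw [show 2 * (Real.pi : ℂ) * Complex.I * ((d : ℂ) * (j : ℂ)) / d
          = (j : ℂ) * (2 * (Real.pi : ℂ) * Complex.I) by field_simp]
      exact Complex.exp_int_mul_two_pi_mul_I j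
    simp [this]
  · have hr1 : r ≠ 1 := by
      intro h
      rw [hr, Complex.exp_eq_one_iff] at h
      obtain ⟨n, hn⟩ := h
      apply hdvd
      refine ⟨n, ?_⟩
      have h2 : (2 * (Real.pi : ℂ) * Complex.I) ≠ 0 := by
        simp [Real.pi_ne_zero, Complex.I_ne_zero]
      have : (a : ℂ) = (d : ℂ) * (n : ℂ) := by
        field_simp at hn
        linear_combination hn
      exact_mod_cast this
    have hrd : r ^ d = 1 := by
      rw [hr, ← Complex.exp_nat_mul]
      rw [show (d : ℂ) * (2 * (Real.pi : ℂ) * Complex.I * (a : ℂ) / d)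
          = (a : ℂ) * (2 * (Real.pi : ℂ) * Complex.I) by field_simp]
      exact Complex.exp_int_mul_two_pi_mul_I a
    rw [geom_sum_eq hr1, hrd]
    simp

private lemma main_aux (w τ : ℂ) (hτ : 0 < τ.im) (d : ℕ) (hd0 : 0 < d) (k : ℤ)
    (p : ℤ → Prop) [DecidablePred p] (hp : ∀ n : ℤ, p (2 * k + d * n) ↔ p n) :
    ∑ l ∈ Finset.range d,
      Complex.exp (-4 * (Real.pi : ℂ) * Complex.I * (k : ℂ) * (l : ℂ) / d) *
        ∑' m : ℤ, (if p m then
          Complex.exp ((Real.pi : ℂ) * Complex.I * (τ / 2) * (m : ℂ) ^ 2) *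
            Complex.exp (2 * (Real.pi : ℂ) * Complex.I * (m : ℂ) * (w + (l : ℂ) / d)) else 0)
      = (d : ℂ) * Complex.exp (2 * (Real.pi : ℂ) * Complex.I * (k : ℂ) ^ 2 * τ) *
          Complex.exp (4 * (Real.pi : ℂ) * Complex.I * (k : ℂ) * w) *
        ∑' n : ℤ, (if p n then
          Complex.exp ((Real.pi : ℂ) * Complex.I * ((d : ℂ) ^ 2 * τ / 2) * (n : ℂ) ^ 2) *
            Complex.exp (2 * (Real.pi : ℂ) * Complex.I * (n : ℂ) *
              ((d : ℂ) * w + (d : ℂ) * (k : ℂ) * τ)) else 0) := by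
  have hd0' : (d : ℂ) ≠ 0 := Nat.cast_ne_zero.mpr hd0.ne'
  set π : ℂ := (Real.pi : ℂ)
  set base : ℤ → ℂ := fun m =>
    Complex.exp (π * Complex.I * (τ / 2) * (m : ℂ) ^ 2) *
      Complex.exp (2 * π * Complex.I * (m : ℂ) * w) with hbase
  -- Step 1+2: swap the finite sum and the tsum and compute the geometric sum
  have step : ∑ l ∈ Finset.range d,
      Complex.exp (-4 * π * Complex.I * (k : ℂ) * (l : ℂ) / d) *
        ∑' m : ℤ, (if p m then
          Complex.exp (π * Complex.I * (τ / 2) * (m : ℂ) ^ 2) *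
            Complex.exp (2 * π * Complex.I * (m : ℂ) * (w + (l : ℂ) / d)) else 0)
      = ∑' m : ℤ, (if p m then
          base m * (if (d : ℤ) ∣ (m - 2 * k) then (d : ℂ) else 0) else 0) := by
    have h1 : ∀ l ∈ Finset.range d,
        Complex.exp (-4 * π * Complex.I * (k : ℂ) * (l : ℂ) / d) *
          ∑' m : ℤ, (if p m then
            Complex.exp (π * Complex.I * (τ / 2) * (m : ℂ) ^ 2) *
              Complex.exp (2 * π * Complex.I * (m : ℂ) * (w + (l : ℂ) / d)) else 0)
        = ∑' m : ℤ, Complex.exp (-4 * π * Complex.I * (k : ℂ) * (l : ℂ) / d) *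
            (if p m then
            Complex.exp (π * Complex.I * (τ / 2) * (m : ℂ) ^ 2) *
              Complex.exp (2 * π * Complex.I * (m : ℂ) * (w + (l : ℂ) / d)) else 0) := by
      intro l _
      rw [tsum_mul_left]
    rw [Finset.sum_congr rfl h1]
    rw [← Summable.tsum_finsetSum (f := fun (l : ℕ) (m : ℤ) =>
      Complex.exp (-4 * π * Complex.I * (k : ℂ) * (l : ℂ) / d) *
        (if p m then
          Complex.exp (π * Complex.I * (τ / 2) * (m : ℂ) ^ 2) *
            Complex.exp (2 * π * Complex.I * (m : ℂ) * (w + (l : ℂ) / d)) else 0))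
      (fun l _ => ((summable_aux p (w + (l : ℂ) / d) τ hτ).mul_left _))]
    refine tsum_congr fun m => ?_
    by_cases hpm : p m
    · simp only [if_pos hpm]
      have h2 : ∀ l : ℕ,
          Complex.exp (-4 * π * Complex.I * (k : ℂ) * (l : ℂ) / d) *
            (Complex.exp (π * Complex.I * (τ / 2) * (m : ℂ) ^ 2) *
              Complex.exp (2 * π * Complex.I * (m : ℂ) * (w + (l : ℂ) / d)))
          = base m * Complex.exp (2 * π * Complex.I * ((m - 2 * k : ℤ) : ℂ) * (l : ℂ) / d) := by
        intro l
        simp only [hbase]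
        rw [← Complex.exp_add, ← Complex.exp_add, ← Complex.exp_add, ← Complex.exp_add]
        congr 1
        push_cast
        field_simp
        ring
      rw [Finset.sum_congr rfl fun l _ => h2 l, ← Finset.mul_sum,
        geom_aux d hd0 (m - 2 * k)]
    · simp [hpm]
  rw [step]
  -- Step 3: reindex via m = 2k + dn
  have hinj : Function.Injective (fun n : ℤ => 2 * k + (d : ℤ) * n) := by
    intro a b h
    dsimp only at h
    have : (d : ℤ) * a = (d : ℤ) * b := by omega
    exact mul_left_cancel₀ (show (d : ℤ) ≠ 0 by exact_mod_cast hd0.ne') this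
  have hsupp : Function.support (fun m : ℤ => if p m then
      base m * (if (d : ℤ) ∣ (m - 2 * k) then (d : ℂ) else 0) else 0)
      ⊆ Set.range (fun n : ℤ => 2 * k + (d : ℤ) * n) := by
    intro m hm
    simp only [Function.mem_support] at hm
    by_contra hr
    apply hm
    have : ¬ (d : ℤ) ∣ (m - 2 * k) := by
      intro ⟨n, hn⟩
      exact hr ⟨n, by show 2 * k + (d : ℤ) * n = m; omega⟩
    simp [this]
  rw [← hinj.tsum_eq hsupp]
  -- Step 4: pull the constants into the RHS tsum and compare termwise
  rw [show (d : ℂ) * Complex.exp (2 * π * Complex.I * (k : ℂ) ^ 2 * τ) *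
      Complex.exp (4 * π * Complex.I * (k : ℂ) * w) *
      (∑' n : ℤ, (if p n then
        Complex.exp (π * Complex.I * ((d : ℂ) ^ 2 * τ / 2) * (n : ℂ) ^ 2) *
          Complex.exp (2 * π * Complex.I * (n : ℂ) *
            ((d : ℂ) * w + (d : ℂ) * (k : ℂ) * τ)) else 0))
      = ∑' n : ℤ, ((d : ℂ) * Complex.exp (2 * π * Complex.I * (k : ℂ) ^ 2 * τ) *
          Complex.exp (4 * π * Complex.I * (k : ℂ) * w) *
        (if p n then
          Complex.exp (π * Complex.I * ((d : ℂ) ^ 2 * τ / 2) * (n : ℂ) ^ 2) *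
            Complex.exp (2 * π * Complex.I * (n : ℂ) *
              ((d : ℂ) * w + (d : ℂ) * (k : ℂ) * τ)) else 0)) from (tsum_mul_left).symm]
  refine tsum_congr fun n => ?_
  rw [if_congr (hp n) rfl rfl]
  by_cases hpn : p n
  · simp only [if_pos hpn]
    have hdvd : (d : ℤ) ∣ (2 * k + (d : ℤ) * n - 2 * k) := ⟨n, by ring⟩
    rw [if_pos hdvd]
    simp only [hbase]
    rw [show Complex.exp (π * Complex.I * (τ / 2) * ((2 * k + (d : ℤ) * n : ℤ) : ℂ) ^ 2) *
        Complex.exp (2 * π * Complex.I * ((2 * k + (d : ℤ) * n : ℤ) : ℂ) * w) * (d : ℂ)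
        = (d : ℂ) * (Complex.exp (π * Complex.I * (τ / 2) * ((2 * k + (d : ℤ) * n : ℤ) : ℂ) ^ 2) *
        Complex.exp (2 * π * Complex.I * ((2 * k + (d : ℤ) * n : ℤ) : ℂ) * w)) by ring]
    rw [mul_assoc ((d : ℂ) * _), mul_assoc (d : ℂ)]
    congr 1
    rw [← Complex.exp_add, ← Complex.exp_add, ← Complex.exp_add, ← Complex.exp_add]
    congr 1
    push_cast
    ring
  · simp [hpn]

private lemma even_shift (d : ℕ) (hd : Odd d) (k : ℤ) (n : ℤ) :
    Even (2 * k + (d : ℤ) * n) ↔ Even n := by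
  have hdodd : Odd (d : ℤ) := by exact_mod_cast hd
  obtain ⟨j, hj⟩ := hdodd
  constructor
  · rintro ⟨c, hc⟩
    exact ⟨c - k - j * n, by linear_combination hc - n * hj⟩
  · rintro ⟨c, hc⟩
    exact ⟨k + j * n + c, by linear_combination hc + n * hj⟩

private lemma odd_shift (d : ℕ) (hd : Odd d) (k : ℤ) (n : ℤ) :
    Odd (2 * k + (d : ℤ) * n) ↔ Odd n := by
  have hdodd : Odd (d : ℤ) := by exact_mod_cast hd
  obtain ⟨j, hj⟩ := hdodd
  constructor
  · rintro ⟨c, hc⟩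
    exact ⟨c - k - j * n, by linear_combination hc - n * hj⟩
  · rintro ⟨c, hc⟩
    exact ⟨k + j * n + c, by linear_combination hc + n * hj⟩

/-- Lemma 3.3: the finite Fourier transforms of `θ₍₀₎` and `θ₍₁₎`. -/
theorem fourier_sum_theta_char (w τ : ℂ) (hτ : 0 < τ.im) (d : ℕ) (hd : Odd d)
    (hd0 : 0 < d) (k : ℤ) :
    (∑ l ∈ Finset.range d,
      Complex.exp (-4 * (Real.pi : ℂ) * Complex.I * (k : ℂ) * (l : ℂ) / d) *
        theta0 (w + (l : ℂ) / d) τ =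
      (d : ℂ) * Complex.exp (2 * (Real.pi : ℂ) * Complex.I * (k : ℂ) ^ 2 * τ) *
        Complex.exp (4 * (Real.pi : ℂ) * Complex.I * (k : ℂ) * w) *
        theta0 ((d : ℂ) * w + (d : ℂ) * (k : ℂ) * τ) ((d : ℂ) ^ 2 * τ)) ∧
    (∑ l ∈ Finset.range d,
      Complex.exp (-4 * (Real.pi : ℂ) * Complex.I * (k : ℂ) * (l : ℂ) / d) *
        theta1 (w + (l : ℂ) / d) τ =
      (d : ℂ) * Complex.exp (2 * (Real.pi : ℂ) * Complex.I * (k : ℂ) ^ 2 * τ) *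
        Complex.exp (4 * (Real.pi : ℂ) * Complex.I * (k : ℂ) * w) *
        theta1 ((d : ℂ) * w + (d : ℂ) * (k : ℂ) * τ) ((d : ℂ) ^ 2 * τ)) := by
  refine ⟨?_, ?_⟩
  · simp only [theta0]
    exact main_aux w τ hτ d hd0 k (fun m => Even m) (even_shift d hd k)
  · simp only [theta1]
    exact main_aux w τ hτ d hd0 k (fun m => Odd m) (odd_shift d hd k)
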